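/- Let s₀(k) = u_k(w) + w − 1 for w ∈ (0,1) fixed, where u_k is defined for all integers k by u₀(w) = w, u_{k+1}(w) = 2^{u_k(w)} − 1, u_{k−1}(w) = log₂(u_k(w)+1). Then k ↦ s₀(k) is strictly decreasing on ℤ, lim_{k→−∞} s₀(k) = w > 0, and lim_{k→+∞} s₀(k) = w − 1 < 0; hence there is a unique integer n₀ with s₀(k) > 0 for k < n₀ and s₀(k) ≤ 0 for k ≥ n₀. -/

import Mathlib

open Filter Real

private lemma step18_lt {x : ℝ} (hx : x ∈ Set.Ioo (0:ℝ) 1) :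
    (2:ℝ) ^ x - 1 < x ∧ (2:ℝ) ^ x - 1 ∈ Set.Ioo (0:ℝ) 1 := by
  obtain ⟨hx0, hx1⟩ := hx
  have hlog : (0:ℝ) < Real.log 2 := Real.log_pos one_lt_two
  have hconv := strictConvexOn_exp.2 (Set.mem_univ (0:ℝ)) (Set.mem_univ (Real.log 2))
    (ne_of_lt hlog) (sub_pos.mpr hx1) hx0 (by ring)
  have h2 : (2:ℝ) ^ x = Real.exp (Real.log 2 * x) := Real.rpow_def_of_pos (by norm_num) x
  have hexp2 : Real.exp (Real.log 2) = 2 := Real.exp_log (by norm_num)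
  have key : (2:ℝ) ^ x < 1 + x := by
    rw [h2]
    have : Real.exp ((1 - x) • (0:ℝ) + x • Real.log 2)
        < (1 - x) • Real.exp 0 + x • Real.exp (Real.log 2) := hconv
    simp only [smul_eq_mul, mul_zero, zero_add, Real.exp_zero, hexp2] at this
    calc Real.exp (Real.log 2 * x) = Real.exp (x * Real.log 2) := by ring_nf
      _ < (1 - x) * 1 + x * 2 := this
      _ = 1 + x := by ring
  have hpos : (0:ℝ) < (2:ℝ) ^ x - 1 := by
    have : (1:ℝ) < (2:ℝ) ^ x :=
      (Real.one_lt_rpow_iff_of_pos (by norm_num)).mpr (Or.inl ⟨one_lt_two, hx0⟩)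
    linarith
  exact ⟨by linarith, hpos, by linarith⟩

private lemma step18_pre {x : ℝ} (h : (2:ℝ) ^ x - 1 ∈ Set.Ioo (0:ℝ) 1) :
    x ∈ Set.Ioo (0:ℝ) 1 := by
  obtain ⟨h0, h1⟩ := h
  have hx0 : 0 < x := by
    have h1' : (1:ℝ) < (2:ℝ) ^ x := by linarith
    rcases (Real.one_lt_rpow_iff_of_pos (by norm_num)).mp h1' with ⟨_, h⟩ | ⟨h, _⟩
    · exact h
    · norm_num at h
  have hx1 : x < 1 := by
    have h2 : (2:ℝ) ^ x < (2:ℝ) ^ (1:ℝ) := by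
      rw [Real.rpow_one]; linarith
    exact (Real.rpow_lt_rpow_left_iff one_lt_two).mp h2
  exact ⟨hx0, hx1⟩

private lemma step18_cont : Continuous (fun x : ℝ => (2:ℝ) ^ x - 1) := by
  have : (fun x : ℝ => (2:ℝ) ^ x - 1) = fun x => Real.exp (Real.log 2 * x) - 1 := by
    funext x; rw [Real.rpow_def_of_pos (by norm_num) x]
  rw [this]
  exact (Real.continuous_exp.comp (continuous_const.mul continuous_id)).sub continuous_const

theorem stmt18 (u : ℤ → ℝ → ℝ)
    (h0 : ∀ t ∈ Set.Icc (0:ℝ) 1, u 0 t = t)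
    (hrec : ∀ k : ℤ, ∀ t ∈ Set.Icc (0:ℝ) 1, u (k + 1) t = (2:ℝ) ^ (u k t) - 1)
    (w : ℝ) (hw : w ∈ Set.Ioo (0:ℝ) 1) :
    StrictAnti (fun k : ℤ => u k w + w - 1) ∧
    Filter.Tendsto (fun k : ℤ => u k w + w - 1) Filter.atBot (nhds w) ∧
    0 < w ∧
    Filter.Tendsto (fun k : ℤ => u k w + w - 1) Filter.atTop (nhds (w - 1)) ∧
    w - 1 < 0 ∧
    ∃! n₀ : ℤ, (∀ k < n₀, 0 < u k w + w - 1) ∧ ∀ k ≥ n₀, u k w + w - 1 ≤ 0 := by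
  have hwI : w ∈ Set.Icc (0:ℝ) 1 := ⟨le_of_lt hw.1, le_of_lt hw.2⟩
  set v : ℤ → ℝ := fun k => u k w with hv
  have hv0 : v 0 = w := h0 w hwI
  have hvrec : ∀ k : ℤ, v (k + 1) = (2:ℝ) ^ (v k) - 1 := fun k => hrec k w hwI
  -- all iterates lie in (0,1)
  have hmem : ∀ k : ℤ, v k ∈ Set.Ioo (0:ℝ) 1 := by
    intro k
    induction k using Int.induction_on with
    | zero => rw [hv0]; exact hw
    | succ n ih => rw [hvrec n]; exact (step18_lt ih).2
    | pred n ih =>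
        apply step18_pre
        rw [← hvrec (-(n:ℤ) - 1)]
        have : (-(n:ℤ) - 1 + 1) = -(n:ℤ) := by ring
        rw [this]; exact ih
  -- strict decrease
  have hstep : ∀ k : ℤ, v (k + 1) < v k := by
    intro k; rw [hvrec k]; exact (step18_lt (hmem k)).1
  have hanti : StrictAnti v := strictAnti_int_of_succ_lt hstep
  have hsanti : StrictAnti (fun k : ℤ => v k + w - 1) := by
    intro a b hab
    have := hanti hab
    simpa using by linarith
  -- bounds
  have hbdd_below : BddBelow (Set.range v) :=
    ⟨0, by rintro _ ⟨k, rfl⟩; exact le_of_lt (hmem k).1⟩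
  have hbdd_above : BddAbove (Set.range v) :=
    ⟨1, by rintro _ ⟨k, rfl⟩; exact le_of_lt (hmem k).2⟩
  -- limit at +∞
  have htop : Tendsto v atTop (nhds (⨅ k, v k)) :=
    tendsto_atTop_ciInf hanti.antitone hbdd_below
  have hbot : Tendsto v atBot (nhds (⨆ k, v k)) :=
    tendsto_atBot_ciSup hanti.antitone hbdd_above
  set L := ⨅ k, v k with hL
  set M := ⨆ k, v k with hM
  -- fixed point equation at both ends
  have hshift_top : Tendsto (fun k : ℤ => k + 1) atTop atTop :=
    Filter.tendsto_atTop_add_const_right _ 1 tendsto_id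
  have hshift_bot : Tendsto (fun k : ℤ => k + 1) atBot atBot :=
    Filter.tendsto_atBot_add_const_right _ 1 tendsto_id
  have hfixL : (2:ℝ) ^ L - 1 = L := by
    have h1 : Tendsto (fun k : ℤ => v (k + 1)) atTop (nhds L) := htop.comp hshift_top
    have h2 : Tendsto (fun k : ℤ => (2:ℝ) ^ (v k) - 1) atTop (nhds ((2:ℝ) ^ L - 1)) :=
      (step18_cont.tendsto L).comp htop
    have : (fun k : ℤ => v (k + 1)) = fun k : ℤ => (2:ℝ) ^ (v k) - 1 := funext hvrec
    rw [this] at h1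
    exact tendsto_nhds_unique h2 h1
  have hfixM : (2:ℝ) ^ M - 1 = M := by
    have h1 : Tendsto (fun k : ℤ => v (k + 1)) atBot (nhds M) := hbot.comp hshift_bot
    have h2 : Tendsto (fun k : ℤ => (2:ℝ) ^ (v k) - 1) atBot (nhds ((2:ℝ) ^ M - 1)) :=
      (step18_cont.tendsto M).comp hbot
    have : (fun k : ℤ => v (k + 1)) = fun k : ℤ => (2:ℝ) ^ (v k) - 1 := funext hvrec
    rw [this] at h1
    exact tendsto_nhds_unique h2 h1
  -- L = 0
  have hL0 : L ≥ 0 := le_ciInf fun k => le_of_lt (hmem k).1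
  have hL1 : L < 1 := lt_of_le_of_lt (ciInf_le hbdd_below 0) (hmem 0).2
  have hLeq : L = 0 := by
    by_contra h
    have hLpos : 0 < L := lt_of_le_of_ne hL0 (Ne.symm h)
    have := (step18_lt ⟨hLpos, hL1⟩).1
    rw [hfixL] at this
    exact lt_irrefl _ this
  -- M = 1
  have hM1 : M ≤ 1 := ciSup_le fun k => le_of_lt (hmem k).2
  have hM0 : 0 < M := lt_of_lt_of_le (hmem 0).1 (le_ciSup hbdd_above 0)
  have hMeq : M = 1 := by
    by_contra h
    have hMlt : M < 1 := lt_of_le_of_ne hM1 h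
    have := (step18_lt ⟨hM0, hMlt⟩).1
    rw [hfixM] at this
    exact lt_irrefl _ this
  rw [hLeq] at htop
  rw [hMeq] at hbot
  have htendTop : Tendsto (fun k : ℤ => v k + w - 1) atTop (nhds (w - 1)) := by
    have := (htop.add_const w).sub_const 1
    simpa using this
  have htendBot : Tendsto (fun k : ℤ => v k + w - 1) atBot (nhds w) := by
    have := (hbot.add_const w).sub_const 1
    have h : (1:ℝ) + w - 1 = w := by ring
    rwa [h] at this
  refine ⟨hsanti, htendBot, hw.1, htendTop, by linarith [hw.2], ?_⟩
  -- existence of unique n₀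
  set s : ℤ → ℝ := fun k => v k + w - 1 with hs
  have hEvTop : ∀ᶠ k in atTop, s k < 0 :=
    htendTop.eventually_lt_const (by linarith [hw.2])
  have hEvBot : ∀ᶠ k in atBot, 0 < s k :=
    htendBot.eventually_const_lt hw.1
  obtain ⟨a, ha⟩ := hEvTop.exists
  obtain ⟨b, hb⟩ := eventually_atBot.mp hEvBot
  have hBdd : ∃ c : ℤ, ∀ z : ℤ, s z ≤ 0 → c ≤ z := by
    refine ⟨b + 1, fun z hz => ?_⟩
    by_contra hc
    push_neg at hc
    have : z ≤ b := by omega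
    exact absurd hz (not_le.mpr (hb z this))
  obtain ⟨n₀, hn₀, hleast⟩ := Int.exists_least_of_bdd hBdd ⟨a, le_of_lt ha⟩
  refine ⟨n₀, ⟨?_, ?_⟩, ?_⟩
  · intro k hk
    by_contra hc
    push_neg at hc
    exact absurd (hleast k hc) (not_le.mpr hk)
  · intro k hk
    rcases eq_or_lt_of_le hk with rfl | hk'
    · exact hn₀
    · exact le_trans (le_of_lt (hsanti hk')) hn₀
  · rintro m ⟨hm1, hm2⟩
    by_contra hne
    rcases lt_or_gt_of_ne hne with h | h
    · exact absurd (hleast m (hm2 m le_rfl)) (not_le.mpr h)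
    · exact absurd hn₀ (not_le.mpr (hm1 n₀ h))
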